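/- For the quiver D₂ with vertices 1,…,n (n ≥ 3), arrows 1 → 2 → ⋯ → n−2, n−2 → n−1, and n → n−2, the number of quasi-hereditary structures on kD₂ equals 3·C_{n−1} − C_{n−2}. -/

import Mathlib

/-!
STATEMENT 10.  `D₂` is the type `D` quiver with vertices `1, …, n` (`n ≥ 3`), arrows
`1 → 2 → ⋯ → n-2`, `n-2 → n-1` and `n → n-2`.  Its path algebra is the incidence algebra of
the path order on the vertices (encoded below on `Fin n`, 0-based: chain `0 ≤ 1 ≤ ⋯ ≤ n-3`,
`n-2` above every chain vertex and above `n-1`, and `n-1` below the last chain vertex `n-3`).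
Quasi-hereditary structures are equivalence classes of adapted orders, two being equivalent
iff they have the same `Dec` and `Inc` relations.  Then
`|qh.str(kD₂)| = 3·C_{n-1} − C_{n-2}`, stated without natural subtraction as
`|qh.str(kD₂)| + C_{n-2} = 3·C_{n-1}`.
-/

section
variable {V : Type*} (le : V → V → Prop)

/-- Adaptedness of `⊲` with respect to the order `le` (the interval criterion). -/
def AdaptedG (lhd : V → V → Prop) : Prop :=
  ∀ i j : V, le i j → ¬ lhd i j → ¬ lhd j i →
    ∃ k : V, le i k ∧ le k j ∧ lhd i k ∧ lhd j k

/-- `(x, y) ∈ Dec(⊲)`. -/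
def DecRelG (lhd : V → V → Prop) (x y : V) : Prop :=
  le y x ∧ ∀ k : V, le y k → le k x → lhd k y

/-- `(x, y) ∈ Inc(⊲)`. -/
def IncRelG (lhd : V → V → Prop) (x y : V) : Prop :=
  le x y ∧ ∀ k : V, le x k → le k y → lhd k y

/-- Equivalence of adapted orders: equal standard and costandard modules. -/
def QHEquivG (lhd₁ lhd₂ : V → V → Prop) : Prop :=
  (∀ x y, DecRelG le lhd₁ x y ↔ DecRelG le lhd₂ x y) ∧
  (∀ x y, IncRelG le lhd₁ x y ↔ IncRelG le lhd₂ x y)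

end

/-- The path order of the quiver `D₂` on `Fin n` (0-based): the chain `0 ≤ 1 ≤ ⋯ ≤ n-3`,
every chain vertex below `n-2`, and `n-1` below `n-3` and `n-2`. -/
def D2le (n : ℕ) (a b : Fin n) : Prop :=
  a = b ∨ (a.val ≤ b.val ∧ b.val + 3 ≤ n) ∨
    (a.val + 3 ≤ n ∧ b.val = n - 2) ∨
    (a.val = n - 1 ∧ (b.val = n - 3 ∨ b.val = n - 2))


open BinaryTree

namespace QHD2

/-- left end of the in-order subtree span of position `i`. -/
def aFn : BinaryTree Unit → ℕ → ℕ
  | .nil, _ => 0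
  | .node _ l r, i =>
    if i < l.numNodes then aFn l i
    else if i = l.numNodes then 0
    else l.numNodes + 1 + aFn r (i - l.numNodes - 1)

/-- right end of the in-order subtree span of position `i`. -/
def bFn : BinaryTree Unit → ℕ → ℕ
  | .nil, _ => 0
  | .node _ l r, i =>
    if i < l.numNodes then bFn l i
    else if i = l.numNodes then l.numNodes + r.numNodes
    else l.numNodes + 1 + bFn r (i - l.numNodes - 1)

theorem aFn_left {a : Unit} {l r : BinaryTree Unit} {i : ℕ} (h : i < l.numNodes) :
    aFn (node a l r) i = aFn l i := by rw [aFn, if_pos h]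

theorem aFn_root {a : Unit} {l r : BinaryTree Unit} :
    aFn (node a l r) l.numNodes = 0 := by
  rw [aFn, if_neg (lt_irrefl _), if_pos rfl]

theorem aFn_right {a : Unit} {l r : BinaryTree Unit} {i : ℕ} (h : l.numNodes < i) :
    aFn (node a l r) i = l.numNodes + 1 + aFn r (i - l.numNodes - 1) := by
  rw [aFn, if_neg (by omega), if_neg (by omega)]

theorem bFn_left {a : Unit} {l r : BinaryTree Unit} {i : ℕ} (h : i < l.numNodes) :
    bFn (node a l r) i = bFn l i := by rw [bFn, if_pos h]

theorem bFn_root {a : Unit} {l r : BinaryTree Unit} :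
    bFn (node a l r) l.numNodes = l.numNodes + r.numNodes := by
  rw [bFn, if_neg (lt_irrefl _), if_pos rfl]

theorem bFn_right {a : Unit} {l r : BinaryTree Unit} {i : ℕ} (h : l.numNodes < i) :
    bFn (node a l r) i = l.numNodes + 1 + bFn r (i - l.numNodes - 1) := by
  rw [bFn, if_neg (by omega), if_neg (by omega)]

theorem span_self : ∀ (T : BinaryTree Unit) (i : ℕ), i < T.numNodes →
    aFn T i ≤ i ∧ i ≤ bFn T i ∧ bFn T i < T.numNodes := by
  intro T
  induction T with
  | nil => intro i hi; simp [numNodes] at hi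
  | node a l r ihl ihr =>
    intro i hi
    simp only [numNodes] at hi ⊢
    rcases lt_trichotomy i l.numNodes with h | h | h
    · have := ihl i h
      rw [aFn_left h, bFn_left h]; omega
    · subst h; rw [aFn_root, bFn_root]; omega
    · have := ihr (i - l.numNodes - 1) (by omega)
      rw [aFn_right h, bFn_right h]; omega

theorem span_trans : ∀ (T : BinaryTree Unit) (i j : ℕ), i < T.numNodes → j < T.numNodes →
    aFn T i ≤ j → j ≤ bFn T i → aFn T i ≤ aFn T j ∧ bFn T j ≤ bFn T i := by
  intro T
  induction T with
  | nil => intro i j hi; simp [numNodes] at hi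
  | node a l r ihl ihr =>
    intro i j hi hj h1 h2
    simp only [numNodes] at hi hj
    rcases lt_trichotomy i l.numNodes with h | h | h
    · rw [aFn_left h, bFn_left h] at *
      have hbl := span_self l i h
      have hjl : j < l.numNodes := by omega
      rw [aFn_left hjl, bFn_left hjl]
      exact ihl i j h hjl h1 h2
    · subst h; rw [aFn_root, bFn_root]
      have := span_self (node a l r) j (by simp only [numNodes]; omega)
      simp only [numNodes] at this; omega
    · rw [aFn_right h, bFn_right h] at *
      have hjr : l.numNodes < j := by omega
      rw [aFn_right hjr, bFn_right hjr]
      have := ihr (i - l.numNodes - 1) (j - l.numNodes - 1) (by omega) (by omega)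
        (by omega) (by omega)
      omega

theorem span_antisymm : ∀ (T : BinaryTree Unit) (i j : ℕ), i < T.numNodes → j < T.numNodes →
    aFn T i ≤ j → j ≤ bFn T i → aFn T j ≤ i → i ≤ bFn T j → i = j := by
  intro T
  induction T with
  | nil => intro i j hi; simp [numNodes] at hi
  | node a l r ihl ihr =>
    intro i j hi hj h1 h2 h3 h4
    simp only [numNodes] at hi hj
    rcases lt_trichotomy i l.numNodes with h | h | h
    · rw [aFn_left h] at h1
      rw [bFn_left h] at h2
      have hbl := span_self l i h
      have hjl : j < l.numNodes := by omega
      rw [aFn_left hjl] at h3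
      rw [bFn_left hjl] at h4
      exact ihl i j h hjl h1 h2 h3 h4
    · subst h
      rcases lt_trichotomy j l.numNodes with h' | h' | h'
      · rw [bFn_left h'] at h4
        have := span_self l j h'; omega
      · omega
      · rw [aFn_right h'] at h3; omega
    · rw [aFn_right h] at h1
      rw [bFn_right h] at h2
      have hjr : l.numNodes < j := by omega
      rw [aFn_right hjr] at h3
      rw [bFn_right hjr] at h4
      have := ihr (i - l.numNodes - 1) (j - l.numNodes - 1) (by omega) (by omega)
        (by omega) (by omega) (by omega) (by omega)
      omega

theorem span_lca : ∀ (T : BinaryTree Unit) (i j : ℕ), i ≤ j → j < T.numNodes →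
    ∃ w, i ≤ w ∧ w ≤ j ∧ aFn T w ≤ i ∧ j ≤ bFn T w := by
  intro T
  induction T with
  | nil => intro i j _ hj; simp [numNodes] at hj
  | node a l r ihl ihr =>
    intro i j hij hj
    simp only [numNodes] at hj
    rcases lt_trichotomy j l.numNodes with h | h | h
    · obtain ⟨w, hw1, hw2, hw3, hw4⟩ := ihl i j hij h
      exact ⟨w, hw1, hw2, by rw [aFn_left (by omega)]; exact hw3,
        by rw [bFn_left (by omega)]; exact hw4⟩
    · exact ⟨l.numNodes, by omega, by omega, by rw [aFn_root]; omega,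
        by rw [bFn_root]; omega⟩
    · by_cases hi : i ≤ l.numNodes
      · exact ⟨l.numNodes, by omega, by omega, by rw [aFn_root]; omega,
          by rw [bFn_root]; omega⟩
      · obtain ⟨w, hw1, hw2, hw3, hw4⟩ :=
          ihr (i - l.numNodes - 1) (j - l.numNodes - 1) (by omega) (by omega)
        refine ⟨l.numNodes + 1 + w, by omega, by omega, ?_, ?_⟩
        · rw [aFn_right (by omega), show l.numNodes + 1 + w - l.numNodes - 1 = w from by omega]
          omega
        · rw [bFn_right (by omega), show l.numNodes + 1 + w - l.numNodes - 1 = w from by omega]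
          omega

theorem span_inj : ∀ (T₁ T₂ : BinaryTree Unit), T₁.numNodes = T₂.numNodes →
    (∀ i, i < T₁.numNodes → aFn T₁ i = aFn T₂ i ∧ bFn T₁ i = bFn T₂ i) → T₁ = T₂ := by
  intro T₁
  induction T₁ with
  | nil =>
    intro T₂ h _
    cases T₂ with
    | nil => rfl
    | node b l r => simp [numNodes] at h
  | node a l r ihl ihr =>
    intro T₂ hcard hspan
    cases T₂ with
    | nil => simp [numNodes] at hcard
    | node b l₂ r₂ =>
      simp only [numNodes] at hcard
      -- the roots agree
      have hroots : l.numNodes = l₂.numNodes := by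
        by_contra hne
        rcases lt_or_gt_of_ne hne with h | h
        · -- l.numNodes < l₂.numNodes : look at position l.numNodes
          have h1 := (hspan l.numNodes (by simp only [numNodes]; omega)).2
          rw [bFn_root, bFn_left h] at h1
          have := span_self l₂ l.numNodes h
          omega
        · have h1 := (hspan l₂.numNodes (by simp only [numNodes]; omega)).2
          rw [bFn_root (a := b), bFn_left h] at h1
          have := span_self l l₂.numNodes h
          omega
      have hl : l = l₂ := by
        refine ihl l₂ hroots (fun i hi => ?_)
        have := hspan i (by simp only [numNodes]; omega)
        rwa [aFn_left hi, bFn_left hi, aFn_left (by omega), bFn_left (by omega)] at this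
      have hr : r = r₂ := by
        refine ihr r₂ (by omega) (fun i hi => ?_)
        have := hspan (l.numNodes + 1 + i) (by simp only [numNodes]; omega)
        rw [aFn_right (by omega), bFn_right (by omega), aFn_right (by omega),
          bFn_right (by omega), show l.numNodes + 1 + i - l.numNodes - 1 = i from by omega,
          show l.numNodes + 1 + i - l₂.numNodes - 1 = i from by omega] at this
        constructor <;> omega
      cases a; cases b; rw [hl, hr]

theorem chain_classify (k : ℕ) : ∀ (lo : ℕ) (r : ℕ → ℕ → Prop),
    (∀ i, lo ≤ i → i < lo + k → r i i) →
    (∀ a b c, lo ≤ a → a < lo + k → lo ≤ b → b < lo + k → lo ≤ c → c < lo + k →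
      r a b → r b c → r a c) →
    (∀ a b, lo ≤ a → a < lo + k → lo ≤ b → b < lo + k → r a b → r b a → a = b) →
    (∀ a b, lo ≤ a → a < lo + k → lo ≤ b → b < lo + k → a ≤ b → ¬ r a b → ¬ r b a →
      ∃ w, a ≤ w ∧ w ≤ b ∧ r a w ∧ r b w) →
    ∃ T : BinaryTree Unit, T.numNodes = k ∧
      ∀ x y, lo ≤ x → x < lo + k → lo ≤ y → y < lo + k →
        ((y ≤ x → ((∀ z, y ≤ z → z ≤ x → r z y) ↔ x ≤ lo + bFn T (y - lo))) ∧
         (x ≤ y → ((∀ z, x ≤ z → z ≤ y → r z y) ↔ lo + aFn T (y - lo) ≤ x))) := by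
  induction k using Nat.strong_induction_on with
  | _ k ih =>
  intro lo r hrefl htrans hanti hadpt
  rcases Nat.eq_zero_or_pos k with hk | hk
  · subst hk
    exact ⟨nil, rfl, fun x y hx1 hx2 => absurd hx2 (by omega)⟩
  classical
  set S := Finset.Ico lo (lo + k) with hS
  obtain ⟨rt, hrtS, hrtmax⟩ := S.exists_max_image
    (fun x => (S.filter (fun z => r z x)).card) ⟨lo, by simp [hS]; omega⟩
  rw [hS, Finset.mem_Ico] at hrtS
  -- every element of the interval is below the root
  have hallrt : ∀ x, lo ≤ x → x < lo + k → r x rt := by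
    intro x hx1 hx2
    by_contra hxr
    have key : ∀ w, lo ≤ w → w < lo + k → r rt w → r x w → False := by
      intro w hw1 hw2 h1 h2
      have hsub : S.filter (fun z => r z rt) ⊂ S.filter (fun z => r z w) := by
        constructor
        · intro z hz
          rw [Finset.mem_filter, hS, Finset.mem_Ico] at *
          exact ⟨hz.1, htrans z rt w hz.1.1 hz.1.2 hrtS.1 hrtS.2 hw1 hw2 hz.2 h1⟩
        · intro hcon
          have hx : x ∈ S.filter (fun z => r z w) := by
            rw [Finset.mem_filter, hS, Finset.mem_Ico]; exact ⟨⟨hx1, hx2⟩, h2⟩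
          have := hcon hx
          rw [Finset.mem_filter] at this
          exact hxr this.2
      have hlt := Finset.card_lt_card hsub
      have := hrtmax w (by rw [hS, Finset.mem_Ico]; exact ⟨hw1, hw2⟩)
      omega
    by_cases hrx : r rt x
    · exact key x hx1 hx2 hrx (hrefl x hx1 hx2)
    · rcases le_total x rt with h | h
      · obtain ⟨w, hw1, hw2, hw3, hw4⟩ :=
          hadpt x rt hx1 hx2 hrtS.1 hrtS.2 h hxr hrx
        exact key w (by omega) (by omega) hw4 hw3
      · obtain ⟨w, hw1, hw2, hw3, hw4⟩ :=
          hadpt rt x hrtS.1 hrtS.2 hx1 hx2 h hrx hxr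
        exact key w (by omega) (by omega) hw3 hw4
  -- recurse on the two sides
  obtain ⟨Tl, hTl, hTlspec⟩ := ih (rt - lo) (by omega) lo r
    (fun i h1 h2 => hrefl i (by omega) (by omega))
    (fun a b c ha1 ha2 hb1 hb2 hc1 hc2 => htrans a b c (by omega) (by omega) (by omega)
      (by omega) (by omega) (by omega))
    (fun a b ha1 ha2 hb1 hb2 => hanti a b (by omega) (by omega) (by omega) (by omega))
    (fun a b ha1 ha2 hb1 hb2 => hadpt a b (by omega) (by omega) (by omega) (by omega))
  obtain ⟨Tr, hTr, hTrspec⟩ := ih (lo + k - rt - 1) (by omega) (rt + 1) r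
    (fun i h1 h2 => hrefl i (by omega) (by omega))
    (fun a b c ha1 ha2 hb1 hb2 hc1 hc2 => htrans a b c (by omega) (by omega) (by omega)
      (by omega) (by omega) (by omega))
    (fun a b ha1 ha2 hb1 hb2 => hanti a b (by omega) (by omega) (by omega) (by omega))
    (fun a b ha1 ha2 hb1 hb2 => hadpt a b (by omega) (by omega) (by omega) (by omega))
  refine ⟨node () Tl Tr, by simp only [numNodes]; omega, ?_⟩
  intro x y hx1 hx2 hy1 hy2
  constructor
  · -- Dec part
    intro hyx
    rcases lt_trichotomy y rt with hy | hy | hy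
    · have hidx : y - lo < Tl.numNodes := by omega
      rw [bFn_left hidx]
      have hb := span_self Tl (y - lo) hidx
      by_cases hxr : x < rt
      · exact (hTlspec x y hx1 (by omega) hy1 (by omega)).1 hyx
      · constructor
        · intro hall
          exfalso
          have h1 : r rt y := hall rt (by omega) (by omega)
          have h2 : r y rt := hallrt y hy1 hy2
          have := hanti rt y hrtS.1 hrtS.2 hy1 hy2 h1 h2
          omega
        · intro hle; exfalso; omega
    · subst hy
      rw [show y - lo = Tl.numNodes from by omega, bFn_root]
      constructor
      · intro _; omega
      · intro _ z hz1 hz2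
        exact hallrt z (by omega) (by omega)
    · have hidx : Tl.numNodes < y - lo := by omega
      rw [bFn_right hidx]
      have hspec := (hTrspec x y (by omega) (by omega) (by omega) (by omega)).1 hyx
      rw [show y - (rt + 1) = y - lo - Tl.numNodes - 1 from by omega] at hspec
      rw [hspec]
      omega
  · -- Inc part
    intro hxy
    rcases lt_trichotomy y rt with hy | hy | hy
    · have hidx : y - lo < Tl.numNodes := by omega
      rw [aFn_left hidx]
      exact (hTlspec x y hx1 (by omega) hy1 (by omega)).2 hxy
    · subst hy
      rw [show y - lo = Tl.numNodes from by omega, aFn_root]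
      constructor
      · intro _; omega
      · intro _ z hz1 hz2
        exact hallrt z (by omega) (by omega)
    · have hidx : Tl.numNodes < y - lo := by omega
      rw [aFn_right hidx]
      by_cases hxr : rt < x
      · have hspec := (hTrspec x y (by omega) (by omega) (by omega) (by omega)).2 hxy
        rw [show y - (rt + 1) = y - lo - Tl.numNodes - 1 from by omega] at hspec
        rw [hspec]
        omega
      · constructor
        · intro hall
          exfalso
          have h1 : r rt y := hall rt (by omega) (by omega)
          have h2 : r y rt := hallrt y hy1 hy2
          have := hanti rt y hrtS.1 hrtS.2 hy1 hy2 h1 h2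
          omega
        · intro hle; exfalso; omega

variable {n : ℕ}

theorem d2le_iff (hn : 3 ≤ n) (x y : Fin n) :
    D2le n x y ↔ (x.val ≤ y.val ∧ y.val ≤ n - 2) ∨ x.val = y.val ∨
      (x.val = n - 1 ∧ (y.val = n - 3 ∨ y.val = n - 2)) := by
  have hx := x.isLt; have hy := y.isLt
  simp only [D2le, Fin.ext_iff]
  omega

/-- the canonical adapted order attached to a tree `T` (with `n-1` nodes, indexing the
chain `0,…,n-2` in-order) and a tag `v ∈ {0,1,2}` describing the position of `n-1`. -/
def canonRel (n : ℕ) (T : BinaryTree Unit) (v : ℕ) (x y : Fin n) : Prop :=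
  if y.val = n - 1 then
    x.val = n - 1 ∨ v = 0 ∨ (v = 2 ∧ aFn T (n - 3) ≤ x.val ∧ x.val ≤ bFn T (n - 3))
  else if x.val = n - 1 then
    (v = 1 ∧ aFn T y.val ≤ n - 3 ∧ n - 3 ≤ bFn T y.val) ∨
    (v = 2 ∧ aFn T y.val ≤ n - 2 ∧ n - 2 ≤ bFn T y.val)
  else aFn T y.val ≤ x.val ∧ x.val ≤ bFn T y.val

/-- `m ⊲ t`, i.e. the last chain vertex `n-2` is an ancestor of `n-3`. -/
def isBeta (n : ℕ) (T : BinaryTree Unit) : Prop := aFn T (n - 2) ≤ n - 3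

section canon
variable (hn : 3 ≤ n) {T : BinaryTree Unit} {v : ℕ} (hK : T.numNodes = n - 1)

theorem canon_s {x y : Fin n} (hy : y.val = n - 1) :
    canonRel n T v x y ↔
      (x.val = n - 1 ∨ v = 0 ∨ (v = 2 ∧ aFn T (n - 3) ≤ x.val ∧ x.val ≤ bFn T (n - 3))) := by
  rw [canonRel, if_pos hy]

theorem canon_sx {x y : Fin n} (hy : y.val ≠ n - 1) (hx : x.val = n - 1) :
    canonRel n T v x y ↔
      ((v = 1 ∧ aFn T y.val ≤ n - 3 ∧ n - 3 ≤ bFn T y.val) ∨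
       (v = 2 ∧ aFn T y.val ≤ n - 2 ∧ n - 2 ≤ bFn T y.val)) := by
  rw [canonRel, if_neg hy, if_pos hx]

theorem canon_cc {x y : Fin n} (hy : y.val ≠ n - 1) (hx : x.val ≠ n - 1) :
    canonRel n T v x y ↔ (aFn T y.val ≤ x.val ∧ x.val ≤ bFn T y.val) := by
  rw [canonRel, if_neg hy, if_neg hx]

include hn hK

theorem beta_not (hb : isBeta n T) : ¬ (n - 2 ≤ bFn T (n - 3)) := by
  intro hcon
  have h1 := span_self T (n - 3) (by omega)
  have h2 := span_self T (n - 2) (by omega)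
  have := span_antisymm T (n - 3) (n - 2) (by omega) (by omega)
    (by omega) hcon (by unfold isBeta at hb; omega) (by omega)
  omega

theorem alpha_yes (hb : ¬ isBeta n T) : n - 2 ≤ bFn T (n - 3) := by
  obtain ⟨w, hw1, hw2, hw3, hw4⟩ := span_lca T (n - 3) (n - 2) (by omega) (by omega)
  unfold isBeta at hb
  rcases (by omega : w = n - 3 ∨ w = n - 2) with h | h <;> subst h
  · exact hw4
  · omega

theorem canon_refl (x : Fin n) : canonRel n T v x x := by
  by_cases hx : x.val = n - 1
  · rw [canon_s hx]; exact Or.inl hx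
  · rw [canon_cc hx hx]
    have := span_self T x.val (by have := x.isLt; omega)
    omega

variable (hv : v ≤ 2) (hβ : v = 2 → isBeta n T)
include hβ

theorem canon_po : IsPartialOrder (Fin n) (canonRel n T v) := by
  refine { refl := canon_refl hn hK, trans := ?_, antisymm := ?_ }
  · intro x y z hxy hyz
    have hxv := x.isLt; have hyv := y.isLt; have hzv := z.isLt
    by_cases hz : z.val = n - 1
    · rw [canon_s hz]
      by_cases hx : x.val = n - 1
      · exact Or.inl hx
      · by_cases hy : y.val = n - 1
        · rw [canon_s hy] at hxy
          rcases hxy with h | h | h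
          · exact absurd h hx
          · exact Or.inr (Or.inl h)
          · exact Or.inr (Or.inr h)
        · rw [canon_s hz] at hyz
          rw [canon_cc hy hx] at hxy
          rcases hyz with h | h | ⟨h2, ha, hb⟩
          · exact absurd h hy
          · exact Or.inr (Or.inl h)
          · refine Or.inr (Or.inr ⟨h2, ?_, ?_⟩) <;>
            · have := span_trans T (n - 3) y.val (by omega) (by omega) ha hb
              omega
    · by_cases hy : y.val = n - 1
      · by_cases hx : x.val = n - 1
        · rw [canon_sx hz hx]
          rw [canon_sx hz hy] at hyz
          exact hyz
        · rw [canon_s hy] at hxy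
          rw [canon_sx hz hy] at hyz
          rw [canon_cc hz hx]
          rcases hxy with h | h | ⟨h2, hxa, hxb⟩
          · exact absurd h hx
          · rcases hyz with ⟨h1, _⟩ | ⟨h1, _⟩ <;> omega
          · rcases hyz with ⟨h1, _⟩ | ⟨h1, hza, hzb⟩
            · omega
            · have hbeta := hβ h2
              unfold isBeta at hbeta
              have h3 := span_self T (n - 2) (by omega)
              have h4 := span_trans T (n - 2) (n - 3) (by omega) (by omega) hbeta (by omega)
              have h5 := span_trans T z.val (n - 2) (by omega) (by omega) hza hzb
              omega
      · by_cases hx : x.val = n - 1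
        · rw [canon_sx hy hx] at hxy
          rw [canon_cc hz hy] at hyz
          rw [canon_sx hz hx]
          have h5 := span_trans T z.val y.val (by omega) (by omega) hyz.1 hyz.2
          rcases hxy with ⟨h1, ha, hb⟩ | ⟨h1, ha, hb⟩
          · exact Or.inl ⟨h1, by omega, by omega⟩
          · exact Or.inr ⟨h1, by omega, by omega⟩
        · rw [canon_cc hy hx] at hxy
          rw [canon_cc hz hy] at hyz
          rw [canon_cc hz hx]
          have := span_trans T z.val y.val (by omega) (by omega) hyz.1 hyz.2
          omega
  · intro x y hxy hyx
    have hxv := x.isLt; have hyv := y.isLt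
    by_cases hy : y.val = n - 1 <;> by_cases hx : x.val = n - 1
    · exact Fin.ext (by omega)
    · exfalso
      rw [canon_s hy] at hxy
      rw [canon_sx hx hy] at hyx
      rcases hxy with h | h | ⟨h2, hxa, hxb⟩
      · exact hx h
      · rcases hyx with ⟨h1, _⟩ | ⟨h1, _⟩ <;> omega
      · rcases hyx with ⟨h1, _⟩ | ⟨h1, hya, hyb⟩
        · omega
        · have hbeta := beta_not hn hK (hβ h2)
          have := span_trans T (n - 3) x.val (by omega) (by omega) hxa hxb
          omega
    · exfalso
      rw [canon_sx hy hx] at hxy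
      rw [canon_s hx] at hyx
      rcases hyx with h | h | ⟨h2, hya, hyb⟩
      · exact hy h
      · rcases hxy with ⟨h1, _⟩ | ⟨h1, _⟩ <;> omega
      · rcases hxy with ⟨h1, _⟩ | ⟨h1, hxa, hxb⟩
        · omega
        · have hbeta := beta_not hn hK (hβ h2)
          have := span_trans T (n - 3) y.val (by omega) (by omega) hya hyb
          omega
    · rw [canon_cc hy hx] at hxy
      rw [canon_cc hx hy] at hyx
      exact Fin.ext (span_antisymm T x.val y.val (by omega) (by omega)
        hyx.1 hyx.2 hxy.1 hxy.2)

include hv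

theorem canon_adapted : AdaptedG (D2le n) (canonRel n T v) := by
  intro i j hle hnij hnji
  have hiv := i.isLt; have hjv := j.isLt
  rw [d2le_iff hn] at hle
  rcases hle with ⟨h1, h2⟩ | h | ⟨h1, h2⟩
  · -- both chain
    by_cases hij : i.val = j.val
    · exact absurd (by rw [show i = j from Fin.ext hij]; exact canon_refl hn hK j) hnij
    · obtain ⟨w, hw1, hw2, hw3, hw4⟩ := span_lca T i.val j.val h1 (by omega)
      have hwb := span_self T w (by omega)
      refine ⟨⟨w, by omega⟩, ?_, ?_, ?_, ?_⟩
      · rw [d2le_iff hn]; left; exact ⟨by simpa using hw1, by simp; omega⟩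
      · rw [d2le_iff hn]; left; exact ⟨by simpa using hw2, by omega⟩
      · rw [canon_cc (x := i) (y := ⟨w, by omega⟩) (by simp; omega) (by omega)]
        simp only []
        exact ⟨hw3, by omega⟩
      · rw [canon_cc (x := j) (y := ⟨w, by omega⟩) (by simp; omega) (by omega)]
        exact ⟨by simpa using hw3.trans (by omega), by simpa using hw4⟩
  · exact absurd (by rw [show i = j from Fin.ext h]; exact canon_refl hn hK j) hnij
  · -- i = s, j ∈ {m, t}
    rcases h2 with h2 | h2
    · -- j = m : always comparable, contradiction
      exfalso
      by_cases hv0 : v = 0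
      · apply hnji; rw [canon_s h1]; exact Or.inr (Or.inl hv0)
      by_cases hv1 : v = 1
      · apply hnij; rw [canon_sx (by omega) h1]
        have := span_self T (n - 3) (by omega)
        exact Or.inl ⟨hv1, by rw [h2]; omega, by rw [h2]; omega⟩
      · have hv2 : v = 2 := by omega
        apply hnji; rw [canon_s h1]
        have := span_self T (n - 3) (by omega)
        exact Or.inr (Or.inr ⟨hv2, by rw [h2]; omega, by rw [h2]; omega⟩)
    · -- j = t
      by_cases hv0 : v = 0
      · exact absurd (by rw [canon_s h1]; exact Or.inr (Or.inl hv0)) hnji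
      by_cases hv2 : v = 2
      · refine absurd ?_ hnij
        rw [canon_sx (by omega) h1]
        have := span_self T (n - 2) (by omega)
        exact Or.inr ⟨hv2, by rw [h2]; omega, by rw [h2]; omega⟩
      · have hv1 : v = 1 := by omega
        by_cases hbeta : isBeta n T
        · refine absurd ?_ hnij
          rw [canon_sx (by omega) h1]
          have := span_self T (n - 2) (by omega)
          exact Or.inl ⟨hv1, by rw [h2]; exact hbeta, by rw [h2]; omega⟩
        · -- α case : witness m = n-3
          refine ⟨⟨n - 3, by omega⟩, ?_, ?_, ?_, ?_⟩
          · rw [d2le_iff hn]; right; right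
            exact ⟨h1, Or.inl rfl⟩
          · rw [d2le_iff hn]; left
            refine ⟨?_, by omega⟩
            show n - 3 ≤ j.val
            omega
          · rw [canon_sx (x := i) (y := ⟨n - 3, by omega⟩) (by show n-3 ≠ n-1; omega) h1]
            have := span_self T (n - 3) (by omega)
            exact Or.inl ⟨hv1, by show aFn T (n-3) ≤ n-3; omega, by show n-3 ≤ bFn T (n-3); omega⟩
          · rw [canon_cc (x := j) (y := ⟨n - 3, by omega⟩) (by show n-3 ≠ n-1; omega) (by omega)]
            have hay := alpha_yes hn hK hbeta
            have := span_self T (n - 3) (by omega)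
            exact ⟨by show aFn T (n-3) ≤ j.val; omega, by show j.val ≤ bFn T (n-3); omega⟩

end canon

/-! ### translating `Dec`/`Inc` on chain pairs to interval conditions -/

/-- transfer of a `Fin n` relation to `ℕ`. -/
def rl (n : ℕ) (l : Fin n → Fin n → Prop) : ℕ → ℕ → Prop :=
  fun z w => ∃ (hz : z < n) (hw : w < n), l ⟨z, hz⟩ ⟨w, hw⟩

section translate
variable (hn : 3 ≤ n) (l : Fin n → Fin n → Prop)
include hn

theorem dec_translate (x y : Fin n) (hx : x.val ≤ n - 2) (hy : y.val ≤ n - 2)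
    (hyx : y.val ≤ x.val) :
    DecRelG (D2le n) l x y ↔ ∀ z, y.val ≤ z → z ≤ x.val → rl n l z y.val := by
  constructor
  · rintro ⟨-, h2⟩ z hz1 hz2
    refine ⟨by omega, by omega, ?_⟩
    have h := h2 ⟨z, by omega⟩ (by rw [d2le_iff hn]; left; exact ⟨hz1, show z ≤ n - 2 by omega⟩)
      (by rw [d2le_iff hn]; left; exact ⟨hz2, hx⟩)
    exact h
  · intro h
    refine ⟨by rw [d2le_iff hn]; left; exact ⟨hyx, hx⟩, ?_⟩
    intro k hk1 hk2
    rw [d2le_iff hn] at hk1 hk2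
    have hkv := k.isLt
    obtain ⟨hz', hw', hl⟩ := h k.val (by omega) (by omega)
    exact hl

theorem inc_translate (x y : Fin n) (hx : x.val ≤ n - 2) (hy : y.val ≤ n - 2)
    (hxy : x.val ≤ y.val) :
    IncRelG (D2le n) l x y ↔ ∀ z, x.val ≤ z → z ≤ y.val → rl n l z y.val := by
  constructor
  · rintro ⟨-, h2⟩ z hz1 hz2
    refine ⟨by omega, by omega, ?_⟩
    exact h2 ⟨z, by omega⟩ (by rw [d2le_iff hn]; left; exact ⟨hz1, show z ≤ n - 2 by omega⟩)
      (by rw [d2le_iff hn]; left; exact ⟨hz2, hy⟩)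
  · intro h
    refine ⟨by rw [d2le_iff hn]; left; exact ⟨hxy, hy⟩, ?_⟩
    intro k hk1 hk2
    rw [d2le_iff hn] at hk1 hk2
    have hkv := k.isLt
    obtain ⟨hz', hw', hl⟩ := h k.val (by omega) (by omega)
    exact hl

variable (hrefl : ∀ a, l a a)
include hrefl

theorem dec_sS {x y : Fin n} (hx : x.val = n - 1) (hy : y.val = n - 1) :
    DecRelG (D2le n) l x y := by
  refine ⟨by rw [d2le_iff hn]; omega, ?_⟩
  intro k hk1 hk2
  rw [d2le_iff hn] at hk1 hk2
  have hkv := k.isLt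
  have : k = y := Fin.ext (by omega)
  rw [this]; exact hrefl y

theorem inc_sS {x y : Fin n} (hx : x.val = n - 1) (hy : y.val = n - 1) :
    IncRelG (D2le n) l x y := by
  refine ⟨by rw [d2le_iff hn]; omega, ?_⟩
  intro k hk1 hk2
  rw [d2le_iff hn] at hk1 hk2
  have hkv := k.isLt
  have : k = y := Fin.ext (by omega)
  rw [this]; exact hrefl y

theorem dec_mS_iff {x y : Fin n} (hx : x.val = n - 3) (hy : y.val = n - 1) :
    DecRelG (D2le n) l x y ↔ l x y := by
  constructor
  · intro h
    exact h.2 x (by rw [d2le_iff hn]; omega) (by rw [d2le_iff hn]; omega)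
  · intro h
    refine ⟨by rw [d2le_iff hn]; omega, ?_⟩
    intro k hk1 hk2
    rw [d2le_iff hn] at hk1 hk2
    have hkv := k.isLt
    rcases (by omega : k.val = n - 1 ∨ k.val = n - 3) with hk | hk
    · rw [show k = y from Fin.ext (by omega)]; exact hrefl y
    · rw [show k = x from Fin.ext (by omega)]; exact h

theorem dec_tS_iff {x y : Fin n} (hx : x.val = n - 2) (hy : y.val = n - 1)
    (m : Fin n) (hm : m.val = n - 3) :
    DecRelG (D2le n) l x y ↔ (l m y ∧ l x y) := by
  constructor
  · intro h
    exact ⟨h.2 m (by rw [d2le_iff hn]; omega) (by rw [d2le_iff hn]; omega),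
      h.2 x (by rw [d2le_iff hn]; omega) (by rw [d2le_iff hn]; omega)⟩
  · intro h
    refine ⟨by rw [d2le_iff hn]; omega, ?_⟩
    intro k hk1 hk2
    rw [d2le_iff hn] at hk1 hk2
    have hkv := k.isLt
    rcases (by omega : k.val = n - 1 ∨ k.val = n - 3 ∨ k.val = n - 2) with hk | hk | hk
    · rw [show k = y from Fin.ext (by omega)]; exact hrefl y
    · rw [show k = m from Fin.ext (by omega)]; exact h.1
    · rw [show k = x from Fin.ext (by omega)]; exact h.2

theorem inc_sM_iff {x y : Fin n} (hx : x.val = n - 1) (hy : y.val = n - 3) :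
    IncRelG (D2le n) l x y ↔ l x y := by
  constructor
  · intro h
    exact h.2 x (by rw [d2le_iff hn]; omega) (by rw [d2le_iff hn]; omega)
  · intro h
    refine ⟨by rw [d2le_iff hn]; omega, ?_⟩
    intro k hk1 hk2
    rw [d2le_iff hn] at hk1 hk2
    have hkv := k.isLt
    rcases (by omega : k.val = n - 1 ∨ k.val = n - 3) with hk | hk
    · rw [show k = x from Fin.ext (by omega)]; exact h
    · rw [show k = y from Fin.ext (by omega)]; exact hrefl y

theorem inc_sT_iff {x y : Fin n} (hx : x.val = n - 1) (hy : y.val = n - 2)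
    (m : Fin n) (hm : m.val = n - 3) :
    IncRelG (D2le n) l x y ↔ (l x y ∧ l m y) := by
  constructor
  · intro h
    exact ⟨h.2 x (by rw [d2le_iff hn]; omega) (by rw [d2le_iff hn]; omega),
      h.2 m (by rw [d2le_iff hn]; omega) (by rw [d2le_iff hn]; omega)⟩
  · intro h
    refine ⟨by rw [d2le_iff hn]; omega, ?_⟩
    intro k hk1 hk2
    rw [d2le_iff hn] at hk1 hk2
    have hkv := k.isLt
    rcases (by omega : k.val = n - 1 ∨ k.val = n - 3 ∨ k.val = n - 2) with hk | hk | hk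
    · rw [show k = x from Fin.ext (by omega)]; exact h.1
    · rw [show k = m from Fin.ext (by omega)]; exact h.2
    · rw [show k = y from Fin.ext (by omega)]; exact hrefl y

theorem inc_mt_iff {x y : Fin n} (hx : x.val = n - 3) (hy : y.val = n - 2) :
    IncRelG (D2le n) l x y ↔ l x y := by
  constructor
  · intro h
    exact h.2 x (by rw [d2le_iff hn]; omega) (by rw [d2le_iff hn]; omega)
  · intro h
    refine ⟨by rw [d2le_iff hn]; omega, ?_⟩
    intro k hk1 hk2
    rw [d2le_iff hn] at hk1 hk2
    have hkv := k.isLt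
    rcases (by omega : k.val = n - 3 ∨ k.val = n - 2) with hk | hk
    · rw [show k = x from Fin.ext (by omega)]; exact h
    · rw [show k = y from Fin.ext (by omega)]; exact hrefl y

end translate

/-! ### `Dec`/`Inc` of the canonical order -/

section canonDI
variable (hn : 3 ≤ n) {T : BinaryTree Unit} {v : ℕ} (hK : T.numNodes = n - 1)
include hn hK

theorem dec_canon_chain {x y : Fin n} (hx : x.val ≤ n - 2) (hy : y.val ≤ n - 2)
    (hyx : y.val ≤ x.val) :
    DecRelG (D2le n) (canonRel n T v) x y ↔ x.val ≤ bFn T y.val := by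
  rw [dec_translate hn _ x y hx hy hyx]
  constructor
  · intro h
    obtain ⟨h1, h2, hc⟩ := h x.val hyx (le_refl _)
    rw [canon_cc (x := (⟨x.val, h1⟩ : Fin n)) (y := (⟨y.val, h2⟩ : Fin n))
      (by show y.val ≠ n-1; omega) (by show x.val ≠ n-1; omega)] at hc
    exact hc.2
  · intro h z hz1 hz2
    refine ⟨by omega, by omega, ?_⟩
    rw [canon_cc (by show y.val ≠ n-1; omega) (by show z ≠ n-1; omega)]
    have := span_self T y.val (by omega)
    exact ⟨show aFn T y.val ≤ z by omega, show z ≤ bFn T y.val by omega⟩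

theorem inc_canon_chain {x y : Fin n} (hx : x.val ≤ n - 2) (hy : y.val ≤ n - 2)
    (hxy : x.val ≤ y.val) :
    IncRelG (D2le n) (canonRel n T v) x y ↔ aFn T y.val ≤ x.val := by
  rw [inc_translate hn _ x y hx hy hxy]
  constructor
  · intro h
    obtain ⟨h1, h2, hc⟩ := h x.val (le_refl _) hxy
    rw [canon_cc (by show y.val ≠ n-1; omega) (by show x.val ≠ n-1; omega)] at hc
    exact hc.1
  · intro h z hz1 hz2
    refine ⟨by omega, by omega, ?_⟩
    rw [canon_cc (by show y.val ≠ n-1; omega) (by show z ≠ n-1; omega)]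
    have := span_self T y.val (by omega)
    exact ⟨show aFn T y.val ≤ z by omega, show z ≤ bFn T y.val by omega⟩

variable (hβ : v = 2 → isBeta n T)
include hβ

theorem canon_bit_ms {x y : Fin n} (hx : x.val = n - 3) (hy : y.val = n - 1) :
    canonRel n T v x y ↔ (v = 0 ∨ v = 2) := by
  rw [canon_s hy]
  have := span_self T (n - 3) (by omega)
  constructor
  · rintro (h | h | ⟨h, -⟩)
    · omega
    · exact Or.inl h
    · exact Or.inr h
  · rintro (h | h)
    · exact Or.inr (Or.inl h)
    · exact Or.inr (Or.inr ⟨h, by omega, by omega⟩)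

theorem canon_bit_ts {x y : Fin n} (hx : x.val = n - 2) (hy : y.val = n - 1) :
    canonRel n T v x y ↔ v = 0 := by
  rw [canon_s hy]
  constructor
  · rintro (h | h | ⟨h, h1, h2⟩)
    · omega
    · exact h
    · exact absurd (by omega : n - 2 ≤ bFn T (n - 3)) (beta_not hn hK (hβ h))
  · intro h
    exact Or.inr (Or.inl h)

theorem canon_bit_sm {x y : Fin n} (hx : x.val = n - 1) (hy : y.val = n - 3) :
    canonRel n T v x y ↔ v = 1 := by
  rw [canon_sx (by omega) hx, hy]
  have := span_self T (n - 3) (by omega)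
  constructor
  · rintro (⟨h, -⟩ | ⟨h, h1, h2⟩)
    · exact h
    · exact absurd (by omega : n - 2 ≤ bFn T (n - 3)) (beta_not hn hK (hβ h))
  · intro h
    exact Or.inl ⟨h, by omega, by omega⟩

theorem canon_bit_st {x y : Fin n} (hx : x.val = n - 1) (hy : y.val = n - 2) :
    canonRel n T v x y ↔ ((v = 1 ∧ isBeta n T) ∨ v = 2) := by
  rw [canon_sx (by omega) hx, hy]
  have := span_self T (n - 2) (by omega)
  unfold isBeta
  constructor
  · rintro (⟨h, h1, h2⟩ | ⟨h, -⟩)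
    · exact Or.inl ⟨h, by omega⟩
    · exact Or.inr h
  · rintro (⟨h, hb⟩ | h)
    · exact Or.inl ⟨h, by omega, by omega⟩
    · exact Or.inr ⟨h, by omega, by omega⟩

theorem canon_bit_mt {x y : Fin n} (hx : x.val = n - 3) (hy : y.val = n - 2) :
    canonRel n T v x y ↔ isBeta n T := by
  rw [canon_cc (by omega) (by omega), hx, hy]
  have := span_self T (n - 2) (by omega)
  unfold isBeta
  omega

end canonDI

/-! ### chain classification for an arbitrary adapted order -/

section spec
variable (hn : 3 ≤ n)
include hn

theorem chain_spec (l : Fin n → Fin n → Prop) (hpo : IsPartialOrder (Fin n) l)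
    (had : AdaptedG (D2le n) l) :
    ∃ T : BinaryTree Unit, T.numNodes = n - 1 ∧
      ∀ x y : Fin n, x.val ≤ n - 2 → y.val ≤ n - 2 →
        ((y.val ≤ x.val → (DecRelG (D2le n) l x y ↔ x.val ≤ bFn T y.val)) ∧
         (x.val ≤ y.val → (IncRelG (D2le n) l x y ↔ aFn T y.val ≤ x.val))) := by
  have hrefl : ∀ a, l a a := hpo.toIsPreorder.toRefl.refl
  have htrans : ∀ a b c : Fin n, l a b → l b c → l a c :=
    fun a b c => hpo.toIsPreorder.toIsTrans.trans a b c
  have hanti : ∀ a b : Fin n, l a b → l b a → a = b :=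
    fun a b => hpo.toAntisymm.antisymm a b
  obtain ⟨T, hT, hspec⟩ := chain_classify (n - 1) 0 (rl n l)
    (fun i h1 h2 => ⟨by omega, by omega, hrefl _⟩)
    (by
      rintro a b c ha1 ha2 hb1 hb2 hc1 hc2 ⟨hx1, hx2, hab⟩ ⟨hy1, hy2, hbc⟩
      exact ⟨hx1, hy2, htrans _ _ _ hab hbc⟩)
    (by
      rintro a b ha1 ha2 hb1 hb2 ⟨hx1, hx2, hab⟩ ⟨hy1, hy2, hba⟩
      exact congrArg Fin.val (hanti _ _ hab hba))
    (by
      intro a b ha1 ha2 hb1 hb2 hab hnab hnba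
      obtain ⟨k, hk1, hk2, hk3, hk4⟩ := had ⟨a, by omega⟩ ⟨b, by omega⟩
        (by rw [d2le_iff hn]; left; exact ⟨hab, show b ≤ n - 2 by omega⟩)
        (fun h => hnab ⟨by omega, by omega, h⟩)
        (fun h => hnba ⟨by omega, by omega, h⟩)
      rw [d2le_iff hn] at hk1 hk2
      simp only [Fin.val_mk] at hk1 hk2
      have hkv := k.isLt
      exact ⟨k.val, by omega, by omega, ⟨by omega, by omega, hk3⟩,
        ⟨by omega, by omega, hk4⟩⟩)
  refine ⟨T, hT, ?_⟩
  intro x y hx hy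
  constructor
  · intro hyx
    rw [dec_translate hn l x y hx hy hyx]
    have := (hspec x.val y.val (by omega) (by omega) (by omega) (by omega)).1 hyx
    simpa using this
  · intro hxy
    rw [inc_translate hn l x y hx hy hxy]
    have := (hspec x.val y.val (by omega) (by omega) (by omega) (by omega)).2 hxy
    simpa using this

end spec

/-! ### the classification of adapted orders on the `D₂`-poset -/

section classifySec
variable (hn : 3 ≤ n)
include hn

theorem classify (l : Fin n → Fin n → Prop) (hpo : IsPartialOrder (Fin n) l)
    (had : AdaptedG (D2le n) l) :
    ∃ (T : BinaryTree Unit) (v : ℕ), T.numNodes = n - 1 ∧ v ≤ 2 ∧ (v = 2 → isBeta n T) ∧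
      (∀ x y, DecRelG (D2le n) l x y ↔ DecRelG (D2le n) (canonRel n T v) x y) ∧
      (∀ x y, IncRelG (D2le n) l x y ↔ IncRelG (D2le n) (canonRel n T v) x y) := by
  classical
  have hrefl : ∀ a, l a a := hpo.toIsPreorder.toRefl.refl
  have htrans : ∀ a b c : Fin n, l a b → l b c → l a c :=
    fun a b c => hpo.toIsPreorder.toIsTrans.trans a b c
  have hanti : ∀ a b : Fin n, l a b → l b a → a = b :=
    fun a b => hpo.toAntisymm.antisymm a b
  obtain ⟨T, hT, hspec⟩ := chain_spec hn l hpo had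
  obtain ⟨sF, hsv⟩ : ∃ z : Fin n, z.val = n - 1 := ⟨⟨n - 1, by omega⟩, rfl⟩
  obtain ⟨tF, htv⟩ : ∃ z : Fin n, z.val = n - 2 := ⟨⟨n - 2, by omega⟩, rfl⟩
  obtain ⟨mF, hmv⟩ : ∃ z : Fin n, z.val = n - 3 := ⟨⟨n - 3, by omega⟩, rfl⟩
  have hmsne : mF ≠ sF := fun h => by rw [h] at hmv; omega
  have htsne : tF ≠ sF := fun h => by rw [h] at htv; omega
  have hmtne : mF ≠ tF := fun h => by rw [h] at hmv; omega
  have hstne : sF ≠ tF := fun h => by rw [h] at hsv; omega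
  -- comparability of m and t
  have hmt_or : l mF tF ∨ l tF mF := by
    by_contra hcon
    push_neg at hcon
    obtain ⟨k, hk1, hk2, hk3, hk4⟩ := had mF tF (by rw [d2le_iff hn]; omega)
      hcon.1 hcon.2
    rw [d2le_iff hn] at hk1 hk2
    have hkv := k.isLt
    rcases (by omega : k.val = n - 3 ∨ k.val = n - 2) with hk | hk
    · exact hcon.2 (by rw [← show k = mF from Fin.ext (by omega)]; exact hk4)
    · exact hcon.1 (by rw [← show k = tF from Fin.ext (by omega)]; exact hk3)
  -- comparability of s and m
  have hsm_or : l sF mF ∨ l mF sF := by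
    by_contra hcon
    push_neg at hcon
    obtain ⟨k, hk1, hk2, hk3, hk4⟩ := had sF mF (by rw [d2le_iff hn]; omega)
      hcon.1 hcon.2
    rw [d2le_iff hn] at hk1 hk2
    have hkv := k.isLt
    rcases (by omega : k.val = n - 1 ∨ k.val = n - 3) with hk | hk
    · exact hcon.2 (by rw [← show k = sF from Fin.ext (by omega)]; exact hk4)
    · exact hcon.1 (by rw [← show k = mF from Fin.ext (by omega)]; exact hk3)
  -- comparability of s and t (or both above m)
  have hst_or : l sF tF ∨ l tF sF ∨ (l sF mF ∧ l tF mF) := by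
    by_cases h1 : l sF tF
    · exact Or.inl h1
    by_cases h2 : l tF sF
    · exact Or.inr (Or.inl h2)
    obtain ⟨k, hk1, hk2, hk3, hk4⟩ := had sF tF (by rw [d2le_iff hn]; omega) h1 h2
    rw [d2le_iff hn] at hk1 hk2
    have hkv := k.isLt
    rcases (by omega : k.val = n - 1 ∨ k.val = n - 3 ∨ k.val = n - 2) with hk | hk | hk
    · exact absurd (by rw [← show k = sF from Fin.ext (by omega)]; exact hk4) h2
    · exact Or.inr (Or.inr (by rw [← show k = mF from Fin.ext (by omega)]; exact ⟨hk3, hk4⟩))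
    · exact absurd (by rw [← show k = tF from Fin.ext (by omega)]; exact hk3) h1
  -- the link between `m ⊲ t` and `isBeta`
  have hlink : l mF tF ↔ isBeta n T := by
    rw [← inc_mt_iff hn l hrefl hmv htv,
      (hspec mF tF (by omega) (by omega)).2 (by omega), htv, hmv]
    rfl
  -- the tag
  set v : ℕ := if l mF sF ∧ l tF sF then 0 else if l mF sF then 2 else 1 with hvdef
  have hv2 : v ≤ 2 := by rw [hvdef]; split_ifs <;> omega
  have hv0 : v = 0 ↔ (l mF sF ∧ l tF sF) := by
    rw [hvdef]; split_ifs with h1 h2 <;> simp [h1]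
  have hvms : (v = 0 ∨ v = 2) ↔ l mF sF := by
    rw [hvdef]; split_ifs with h1 h2
    · simp [h1.1]
    · simp [h2]
    · simp [h2]
  have hβ : v = 2 → isBeta n T := by
    intro h2
    have hms' : l mF sF := hvms.mp (Or.inr h2)
    have hnts : ¬ l tF sF := fun h' => by rw [hv0.mpr ⟨hms', h'⟩] at h2; omega
    rcases hmt_or with h | h
    · exact hlink.mp h
    · exact absurd (htrans _ _ _ h hms') hnts
  have hcrefl := canon_refl (T := T) (v := v) hn hT
  refine ⟨T, v, hT, hv2, hβ, ?_, ?_⟩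
  · -- Dec
    intro x y
    have hxv := x.isLt; have hyv := y.isLt
    by_cases hy : y.val = n - 1
    · by_cases hx : x.val = n - 1
      · exact iff_of_true (dec_sS hn l hrefl hx hy)
          (dec_sS hn (canonRel n T v) hcrefl hx hy)
      · by_cases hxm : x.val = n - 3
        · rw [dec_mS_iff hn l hrefl hxm hy,
            dec_mS_iff hn (canonRel n T v) hcrefl hxm hy,
            canon_bit_ms hn hT hβ hxm hy,
            show x = mF from Fin.ext (by omega), show y = sF from Fin.ext (by omega)]
          exact hvms.symm
        · by_cases hxt : x.val = n - 2
          · rw [dec_tS_iff hn l hrefl hxt hy mF hmv,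
              dec_tS_iff hn (canonRel n T v) hcrefl hxt hy mF hmv,
              canon_bit_ms hn hT hβ hmv hy, canon_bit_ts hn hT hβ hxt hy,
              show x = tF from Fin.ext (by omega), show y = sF from Fin.ext (by omega)]
            constructor
            · intro h
              have h0 : v = 0 := hv0.mpr h
              exact ⟨Or.inl h0, h0⟩
            · rintro ⟨-, h0⟩
              exact hv0.mp h0
          · have hle : ¬ D2le n y x := by rw [d2le_iff hn]; omega
            exact iff_of_false (fun h => hle h.1) (fun h => hle h.1)
    · by_cases hx : x.val = n - 1
      · have hle : ¬ D2le n y x := by rw [d2le_iff hn]; omega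
        exact iff_of_false (fun h => hle h.1) (fun h => hle h.1)
      · by_cases hyx : y.val ≤ x.val
        · rw [(hspec x y (by omega) (by omega)).1 hyx,
            dec_canon_chain hn hT (by omega) (by omega) hyx]
        · have hle : ¬ D2le n y x := by rw [d2le_iff hn]; omega
          exact iff_of_false (fun h => hle h.1) (fun h => hle h.1)
  · -- Inc
    intro x y
    have hxv := x.isLt; have hyv := y.isLt
    by_cases hx : x.val = n - 1
    · by_cases hy : y.val = n - 1
      · exact iff_of_true (inc_sS hn l hrefl hx hy)
          (inc_sS hn (canonRel n T v) hcrefl hx hy)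
      · by_cases hym : y.val = n - 3
        · rw [inc_sM_iff hn l hrefl hx hym,
            inc_sM_iff hn (canonRel n T v) hcrefl hx hym,
            canon_bit_sm hn hT hβ hx hym,
            show x = sF from Fin.ext (by omega), show y = mF from Fin.ext (by omega)]
          constructor
          · intro h
            have hnot : ¬ l mF sF := fun h' => hmsne (hanti _ _ h' (by
                exact h) |>.symm ▸ rfl)
            have : ¬ (v = 0 ∨ v = 2) := fun h' => hnot (hvms.mp h')
            omega
          · intro h1
            have hnot : ¬ l mF sF := fun h' => by
              have := hvms.mpr h'; omega
            rcases hsm_or with h | h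
            · exact h
            · exact absurd h hnot
        · by_cases hyt : y.val = n - 2
          · rw [inc_sT_iff hn l hrefl hx hyt mF hmv,
              inc_sT_iff hn (canonRel n T v) hcrefl hx hyt mF hmv,
              canon_bit_st hn hT hβ hx hyt, canon_bit_mt hn hT hβ hmv hyt,
              show x = sF from Fin.ext (by omega), show y = tF from Fin.ext (by omega)]
            constructor
            · rintro ⟨h1, h2⟩
              have hb := hlink.mp h2
              refine ⟨?_, hb⟩
              by_cases h0 : v = 0
              · exfalso
                have hts' : l tF sF := (hv0.mp h0).2
                exact hstne (hanti _ _ h1 hts')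
              · rcases (by omega : v = 1 ∨ v = 2) with h' | h'
                · exact Or.inl ⟨h', hb⟩
                · exact Or.inr h'
            · rintro ⟨h1, hb⟩
              have h2 : l mF tF := hlink.mpr hb
              refine ⟨?_, h2⟩
              rcases h1 with ⟨h1, -⟩ | h1
              · have hnot : ¬ l mF sF := fun h' => by
                  have := hvms.mpr h'; omega
                have hsm : l sF mF := by
                  rcases hsm_or with h | h
                  · exact h
                  · exact absurd h hnot
                exact htrans _ _ _ hsm h2
              · have hms' : l mF sF := hvms.mp (Or.inr h1)
                have hnts : ¬ l tF sF := fun h' => by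
                  have := hv0.mpr ⟨hms', h'⟩; omega
                rcases hst_or with h | h | ⟨h3, h4⟩
                · exact h
                · exact absurd h hnts
                · exact absurd (hanti _ _ h3 hms') (fun hh => hmsne hh.symm)
          · have hle : ¬ D2le n x y := by rw [d2le_iff hn]; omega
            exact iff_of_false (fun h => hle h.1) (fun h => hle h.1)
    · by_cases hy : y.val = n - 1
      · have hle : ¬ D2le n x y := by rw [d2le_iff hn]; omega
        exact iff_of_false (fun h => hle h.1) (fun h => hle h.1)
      · by_cases hxy : x.val ≤ y.val
        · rw [(hspec x y (by omega) (by omega)).2 hxy,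
            inc_canon_chain hn hT (by omega) (by omega) hxy]
        · have hle : ¬ D2le n x y := by rw [d2le_iff hn]; omega
          exact iff_of_false (fun h => hle h.1) (fun h => hle h.1)

end classifySec

/-! ### uniqueness of the combinatorial data -/

section uniqueSec
variable (hn : 3 ≤ n)
include hn

set_option maxHeartbeats 1600000 in
theorem canon_unique {T T' : BinaryTree Unit} {v v' : ℕ}
    (hT : T.numNodes = n - 1) (hT' : T'.numNodes = n - 1)
    (hv : v ≤ 2) (hv' : v' ≤ 2)
    (hβ : v = 2 → isBeta n T) (hβ' : v' = 2 → isBeta n T')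
    (hdec : ∀ x y, DecRelG (D2le n) (canonRel n T v) x y ↔
      DecRelG (D2le n) (canonRel n T' v') x y)
    (hinc : ∀ x y, IncRelG (D2le n) (canonRel n T v) x y ↔
      IncRelG (D2le n) (canonRel n T' v') x y) :
    T = T' ∧ v = v' := by
  have hTT : T = T' := by
    apply span_inj T T' (by omega)
    intro i hi
    rw [hT] at hi
    have h1 := span_self T i (by omega)
    have h2 := span_self T' i (by omega)
    obtain ⟨yi, hyi⟩ : ∃ z : Fin n, z.val = i := ⟨⟨i, by omega⟩, rfl⟩
    obtain ⟨xa, hxa⟩ : ∃ z : Fin n, z.val = aFn T i := ⟨⟨aFn T i, by omega⟩, rfl⟩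
    obtain ⟨xa', hxa'⟩ : ∃ z : Fin n, z.val = aFn T' i := ⟨⟨aFn T' i, by omega⟩, rfl⟩
    obtain ⟨xb, hxb⟩ : ∃ z : Fin n, z.val = bFn T i := ⟨⟨bFn T i, by omega⟩, rfl⟩
    obtain ⟨xb', hxb'⟩ : ∃ z : Fin n, z.val = bFn T' i := ⟨⟨bFn T' i, by omega⟩, rfl⟩
    constructor
    · have e1 := (inc_canon_chain (v := v) hn hT (x := xa) (y := yi) (by omega) (by omega)
        (by omega)).symm.trans ((hinc xa yi).trans
          (inc_canon_chain (v := v') hn hT' (by omega) (by omega) (by omega)))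
      have e2 := (inc_canon_chain (v := v) hn hT (x := xa') (y := yi) (by omega) (by omega)
        (by omega)).symm.trans ((hinc xa' yi).trans
          (inc_canon_chain (v := v') hn hT' (by omega) (by omega) (by omega)))
      rw [hyi, hxa] at e1
      rw [hyi, hxa'] at e2
      have := e1.mp (le_refl _)
      have := e2.mpr (le_refl _)
      omega
    · have e1 := (dec_canon_chain (v := v) hn hT (x := xb) (y := yi) (by omega) (by omega)
        (by omega)).symm.trans ((hdec xb yi).trans
          (dec_canon_chain (v := v') hn hT' (by omega) (by omega) (by omega)))
      have e2 := (dec_canon_chain (v := v) hn hT (x := xb') (y := yi) (by omega) (by omega)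
        (by omega)).symm.trans ((hdec xb' yi).trans
          (dec_canon_chain (v := v') hn hT' (by omega) (by omega) (by omega)))
      rw [hyi, hxb] at e1
      rw [hyi, hxb'] at e2
      have := e1.mp (le_refl _)
      have := e2.mpr (le_refl _)
      omega
  subst hTT
  refine ⟨rfl, ?_⟩
  obtain ⟨sF, hsv⟩ : ∃ z : Fin n, z.val = n - 1 := ⟨⟨n - 1, by omega⟩, rfl⟩
  obtain ⟨tF, htv⟩ : ∃ z : Fin n, z.val = n - 2 := ⟨⟨n - 2, by omega⟩, rfl⟩
  obtain ⟨mF, hmv⟩ : ∃ z : Fin n, z.val = n - 3 := ⟨⟨n - 3, by omega⟩, rfl⟩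
  have hcrefl := canon_refl (T := T) (v := v) hn hT
  have hcrefl' := canon_refl (T := T) (v := v') hn hT
  have e1 := hdec tF sF
  rw [dec_tS_iff hn (canonRel n T v) hcrefl htv hsv mF hmv,
    dec_tS_iff hn (canonRel n T v') hcrefl' htv hsv mF hmv,
    canon_bit_ms hn hT hβ hmv hsv, canon_bit_ts hn hT hβ htv hsv,
    canon_bit_ms hn hT hβ' hmv hsv, canon_bit_ts hn hT hβ' htv hsv] at e1
  have e2 := hdec mF sF
  rw [dec_mS_iff hn (canonRel n T v) hcrefl hmv hsv,
    dec_mS_iff hn (canonRel n T v') hcrefl' hmv hsv,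
    canon_bit_ms hn hT hβ hmv hsv, canon_bit_ms hn hT hβ' hmv hsv] at e2
  omega

end uniqueSec

/-! ### counting the combinatorial data -/

/-- attach a new node at the end of the right spine. -/
def addLast : BinaryTree Unit → BinaryTree Unit
  | .nil => node () nil nil
  | .node a l r => node a l (addLast r)

theorem addLast_numNodes (T : BinaryTree Unit) : (addLast T).numNodes = T.numNodes + 1 := by
  induction T with
  | nil => rfl
  | node a l r ihl ihr =>
    show l.numNodes + (addLast r).numNodes + 1 = l.numNodes + r.numNodes + 1 + 1
    rw [ihr]
    omega

theorem addLast_aFn (T : BinaryTree Unit) : aFn (addLast T) T.numNodes = T.numNodes := by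
  induction T with
  | nil =>
    show aFn (node () nil nil) nil.numNodes = nil.numNodes
    rw [aFn_root]
    rfl
  | node a l r ihl ihr =>
    show aFn (node a l (addLast r)) (l.numNodes + r.numNodes + 1) =
      l.numNodes + r.numNodes + 1
    rw [aFn_right (by omega)]
    rw [show l.numNodes + r.numNodes + 1 - l.numNodes - 1 = r.numNodes from by omega, ihr]
    omega

theorem addLast_ne_nil (T : BinaryTree Unit) : addLast T ≠ nil := by
  cases T <;> simp [addLast]

theorem addLast_inj : ∀ T₁ T₂ : BinaryTree Unit, addLast T₁ = addLast T₂ → T₁ = T₂ := by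
  intro T₁
  induction T₁ with
  | nil =>
    intro T₂ h
    cases T₂ with
    | nil => rfl
    | node b l r =>
      simp only [addLast, node.injEq] at h
      exact absurd h.2.2.symm (addLast_ne_nil r)
  | node a l r ihl ihr =>
    intro T₂ h
    cases T₂ with
    | nil =>
      simp only [addLast, node.injEq] at h
      exact absurd h.2.2 (addLast_ne_nil r)
    | node b l₂ r₂ =>
      simp only [addLast, node.injEq] at h
      cases a; cases b
      rw [h.2.1, ihr r₂ h.2.2]

theorem alpha_surj : ∀ T : BinaryTree Unit, 1 ≤ T.numNodes →
    aFn T (T.numNodes - 1) = T.numNodes - 1 → ∃ T', T = addLast T' := by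
  intro T
  induction T with
  | nil => intro h; simp [numNodes] at h
  | node a l r ihl ihr =>
    intro h1 h2
    by_cases hr : r.numNodes = 0
    · have hrnil : r = nil := by
        cases r with
        | nil => rfl
        | node b l₂ r₂ => simp [numNodes] at hr
      subst hrnil
      simp only [numNodes] at h2
      rw [show l.numNodes + 0 + 1 - 1 = l.numNodes from by omega, aFn_root] at h2
      have hlnil : l = nil := by
        cases l with
        | nil => rfl
        | node b l₂ r₂ => simp [numNodes] at h2
      subst hlnil
      cases a
      exact ⟨nil, rfl⟩
    · simp only [numNodes] at h2
      rw [show l.numNodes + r.numNodes + 1 - 1 = l.numNodes + r.numNodes from by omega,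
        aFn_right (by omega),
        show l.numNodes + r.numNodes - l.numNodes - 1 = r.numNodes - 1 from by omega] at h2
      obtain ⟨r', hr'⟩ := ihr (by omega) (by omega)
      exact ⟨node a l r', by rw [hr']; rfl⟩

section countSec
variable (hn : 3 ≤ n)
include hn

open scoped Classical in
theorem count_data :
    Nat.card {p : BinaryTree Unit × ℕ // p.1.numNodes = n - 1 ∧ p.2 ≤ 2 ∧
      (p.2 = 2 → isBeta n p.1)} + catalan (n - 2) = 3 * catalan (n - 1) := by
  classical
  set trees := treesOfNumNodesEq (n - 1) with htrees
  set bset : Finset (BinaryTree Unit × ℕ) :=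
    (trees ×ˢ ({0, 1} : Finset ℕ)) ∪ ((trees.filter (fun T => isBeta n T)) ×ˢ {2})
    with hbset
  have hmem : ∀ p : BinaryTree Unit × ℕ, p ∈ bset ↔
      (p.1.numNodes = n - 1 ∧ p.2 ≤ 2 ∧ (p.2 = 2 → isBeta n p.1)) := by
    intro p
    rw [hbset]
    simp only [Finset.mem_union, Finset.mem_product, mem_treesOfNumNodesEq,
      Finset.mem_filter, Finset.mem_insert, Finset.mem_singleton, htrees]
    constructor
    · rintro (⟨h1, h2 | h2⟩ | ⟨⟨h1, hb⟩, h2⟩)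
      · exact ⟨h1, by omega, by omega⟩
      · exact ⟨h1, by omega, by omega⟩
      · exact ⟨h1, by omega, fun _ => hb⟩
    · rintro ⟨h1, h2, h3⟩
      by_cases h4 : p.2 = 2
      · exact Or.inr ⟨⟨h1, h3 h4⟩, h4⟩
      · exact Or.inl ⟨h1, by omega⟩
  have hcard1 : Nat.card {p : BinaryTree Unit × ℕ // p.1.numNodes = n - 1 ∧ p.2 ≤ 2 ∧
      (p.2 = 2 → isBeta n p.1)} = bset.card := by
    rw [← Nat.card_eq_finsetCard]
    exact Nat.card_congr (Equiv.subtypeEquivRight (fun p => (hmem p).symm))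
  have hdisj : Disjoint (trees ×ˢ ({0, 1} : Finset ℕ))
      ((trees.filter (fun T => isBeta n T)) ×ˢ ({2} : Finset ℕ)) := by
    rw [Finset.disjoint_left]
    rintro p hp1 hp2
    simp only [Finset.mem_product, Finset.mem_insert, Finset.mem_singleton] at hp1 hp2
    omega
  have hsplit : (trees.filter (fun T => isBeta n T)).card +
      (trees.filter (fun T => ¬ isBeta n T)).card = catalan (n - 1) := by
    rw [Finset.card_filter_add_card_filter_not, htrees,
      treesOfNumNodesEq_card_eq_catalan]
  have halpha : (trees.filter (fun T => ¬ isBeta n T)).card = catalan (n - 2) := by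
    rw [← treesOfNumNodesEq_card_eq_catalan (n - 2)]
    refine (Finset.card_bij (fun T _ => addLast T) ?_ ?_ ?_).symm
    · intro T hT
      rw [mem_treesOfNumNodesEq] at hT
      show addLast T ∈ Finset.filter (fun T => ¬ isBeta n T) trees
      rw [Finset.mem_filter, htrees, mem_treesOfNumNodesEq, addLast_numNodes, hT]
      have h2 := addLast_aFn T
      rw [hT] at h2
      refine ⟨by omega, ?_⟩
      unfold isBeta
      omega
    · intro T₁ h₁ T₂ h₂ h
      exact addLast_inj T₁ T₂ h
    · intro T hT
      rw [Finset.mem_filter, htrees, mem_treesOfNumNodesEq] at hT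
      obtain ⟨h1, h2⟩ := hT
      have hb := span_self T (n - 2) (by omega)
      have ha : aFn T (T.numNodes - 1) = T.numNodes - 1 := by
        rw [h1]
        rw [show n - 1 - 1 = n - 2 from by omega]
        unfold isBeta at h2
        omega
      obtain ⟨T', hT'⟩ := alpha_surj T (by omega) ha
      refine ⟨T', ?_, hT'.symm⟩
      rw [mem_treesOfNumNodesEq]
      have := addLast_numNodes T'
      rw [← hT', h1] at this
      omega
  rw [hcard1, hbset, Finset.card_union_of_disjoint hdisj, Finset.card_product,
    Finset.card_product]
  rw [htrees] at hsplit halpha ⊢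
  rw [treesOfNumNodesEq_card_eq_catalan]
  have h01 : ({0, 1} : Finset ℕ).card = 2 := rfl
  have h2' : ({2} : Finset ℕ).card = 1 := rfl
  rw [h01, h2']
  omega

end countSec

/-! ### assembly -/

noncomputable def Fmap (hn : 3 ≤ n)
    (l : {l : Fin n → Fin n → Prop // IsPartialOrder (Fin n) l ∧ AdaptedG (D2le n) l}) :
    {p : BinaryTree Unit × ℕ // p.1.numNodes = n - 1 ∧ p.2 ≤ 2 ∧ (p.2 = 2 → isBeta n p.1)} :=
  ⟨((classify hn l.1 l.2.1 l.2.2).choose, (classify hn l.1 l.2.1 l.2.2).choose_spec.choose),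
    (classify hn l.1 l.2.1 l.2.2).choose_spec.choose_spec.1,
    (classify hn l.1 l.2.1 l.2.2).choose_spec.choose_spec.2.1,
    (classify hn l.1 l.2.1 l.2.2).choose_spec.choose_spec.2.2.1⟩

theorem Fmap_spec (hn : 3 ≤ n)
    (l : {l : Fin n → Fin n → Prop // IsPartialOrder (Fin n) l ∧ AdaptedG (D2le n) l}) :
    (∀ x y, DecRelG (D2le n) l.1 x y ↔
       DecRelG (D2le n) (canonRel n (Fmap hn l).1.1 (Fmap hn l).1.2) x y) ∧
    (∀ x y, IncRelG (D2le n) l.1 x y ↔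
       IncRelG (D2le n) (canonRel n (Fmap hn l).1.1 (Fmap hn l).1.2) x y) :=
  ⟨(classify hn l.1 l.2.1 l.2.2).choose_spec.choose_spec.2.2.2.1,
   (classify hn l.1 l.2.1 l.2.2).choose_spec.choose_spec.2.2.2.2⟩

theorem Fmap_eq (hn : 3 ≤ n)
    (l₁ l₂ : {l : Fin n → Fin n → Prop // IsPartialOrder (Fin n) l ∧ AdaptedG (D2le n) l})
    (h : QHEquivG (D2le n) l₁.1 l₂.1) : Fmap hn l₁ = Fmap hn l₂ := by
  obtain ⟨hd, hi⟩ := h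
  have s1 := Fmap_spec hn l₁
  have s2 := Fmap_spec hn l₂
  have hu := canon_unique hn (Fmap hn l₁).2.1 (Fmap hn l₂).2.1
    (Fmap hn l₁).2.2.1 (Fmap hn l₂).2.2.1 (Fmap hn l₁).2.2.2 (Fmap hn l₂).2.2.2
    (fun x y => ((s1.1 x y).symm.trans (hd x y)).trans (s2.1 x y))
    (fun x y => ((s1.2 x y).symm.trans (hi x y)).trans (s2.2 x y))
  exact Subtype.ext (Prod.ext hu.1 hu.2)

noncomputable def Gmap (hn : 3 ≤ n)
    (d : {p : BinaryTree Unit × ℕ // p.1.numNodes = n - 1 ∧ p.2 ≤ 2 ∧ (p.2 = 2 → isBeta n p.1)}) :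
    {l : Fin n → Fin n → Prop // IsPartialOrder (Fin n) l ∧ AdaptedG (D2le n) l} :=
  ⟨canonRel n d.1.1 d.1.2, canon_po hn d.2.1 d.2.2.2,
    canon_adapted hn d.2.1 d.2.2.1 d.2.2.2⟩

noncomputable def mainEquiv (hn : 3 ≤ n) :
    Quot (fun (l₁ l₂ : {l : Fin n → Fin n → Prop //
        IsPartialOrder (Fin n) l ∧ AdaptedG (D2le n) l}) =>
      QHEquivG (D2le n) l₁.1 l₂.1) ≃
    {p : BinaryTree Unit × ℕ // p.1.numNodes = n - 1 ∧ p.2 ≤ 2 ∧ (p.2 = 2 → isBeta n p.1)} := by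
  refine ⟨Quot.lift (Fmap hn) (fun a b h => Fmap_eq hn a b h),
    fun d => Quot.mk _ (Gmap hn d), ?_, ?_⟩
  · intro q
    induction q using Quot.ind with
    | _ l =>
      apply Quot.sound
      obtain ⟨s1, s2⟩ := Fmap_spec hn l
      exact ⟨fun x y => (s1 x y).symm, fun x y => (s2 x y).symm⟩
  · intro d
    show Fmap hn (Gmap hn d) = d
    obtain ⟨s1, s2⟩ := Fmap_spec hn (Gmap hn d)
    have hu := canon_unique hn (Fmap hn (Gmap hn d)).2.1 d.2.1
      (Fmap hn (Gmap hn d)).2.2.1 d.2.2.1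
      (Fmap hn (Gmap hn d)).2.2.2 d.2.2.2
      (fun x y => (s1 x y).symm) (fun x y => (s2 x y).symm)
    exact Subtype.ext (Prod.ext hu.1 hu.2)

end QHD2

/-- `|qh.str(kD₂)| = 3·C_{n-1} − C_{n-2}` for `n ≥ 3`. -/
theorem card_qhStr_D2 (n : ℕ) (hn : 3 ≤ n) :
    Nat.card (Quot (fun (l₁ l₂ : {l : Fin n → Fin n → Prop //
        IsPartialOrder (Fin n) l ∧ AdaptedG (D2le n) l}) =>
      QHEquivG (D2le n) l₁.1 l₂.1)) + catalan (n - 2) = 3 * catalan (n - 1) := by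
  rw [Nat.card_congr (QHD2.mainEquiv hn)]
  exact QHD2.count_data hn
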